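/- Let S be a finite nilpotent semigroup with zero element z (i.e. z·s = s·z = z for all s ∈ S, and there is n such that every product of n elements of S equals z). Let k be a field and let φ : S → Mat_{m×m}(k) be any map with φ(st) = φ(s)φ(t) for all s, t ∈ S and φ(z) = 0. Then φ is equivalent to a representation by strictly upper triangular matrices: there exists an invertible matrix P ∈ Mat_{m×m}(k) such that for every s ∈ S the matrix P⁻¹ φ(s) P has (i,j)-entry equal to 0 whenever j ≤ i. -/

import Mathlib

private lemma foldl_mul_assoc' {S : Type*} [Semigroup S] :
    ∀ (L : List S) (a b : S), L.foldl (· * ·) (a * b) = a * L.foldl (· * ·) b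
  | [], _, _ => rfl
  | c :: L, a, b => by
    simp only [List.foldl_cons, mul_assoc]
    exact foldl_mul_assoc' L a (b * c)

/-- Every zero-preserving matrix representation of a finite nilpotent semigroup
is equivalent to a representation by strictly upper triangular matrices. -/
theorem nilpotent_rep_strictly_upper_triangularizable
    {S : Type*} [Semigroup S] [Finite S] (z : S)
    (hz : ∀ s : S, z * s = z ∧ s * z = z)
    (hnil : ∃ n : ℕ, ∀ f : Fin (n + 1) → S,
      (List.ofFn fun i : Fin n => f i.succ).foldl (· * ·) (f 0) = z)
    (k : Type*) [Field k] (m : ℕ) (φ : S → Matrix (Fin m) (Fin m) k)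
    (hhom : ∀ s t : S, φ (s * t) = φ s * φ t) (hφz : φ z = 0) :
    ∃ P : Matrix (Fin m) (Fin m) k, IsUnit P ∧
      ∀ s : S, ∀ i j : Fin m, j ≤ i → (P⁻¹ * φ s * P) i j = 0 := by
  classical
  obtain ⟨n, hn⟩ := hnil
  -- the linear maps
  set L : S → ((Fin m → k) →ₗ[k] (Fin m → k)) := fun s => Matrix.toLin' (φ s) with hL
  -- the descending chain of subspaces
  set V : ℕ → Submodule k (Fin m → k) :=
    fun j => j.rec ⊤ (fun _ Vj => ⨆ s : S, Submodule.map (L s) Vj) with hVdef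
  have hV0 : V 0 = ⊤ := rfl
  have hVsucc : ∀ j, V (j + 1) = ⨆ s : S, Submodule.map (L s) (V j) := fun _ => rfl
  have hmap : ∀ (s : S) (j : ℕ), Submodule.map (L s) (V j) ≤ V (j + 1) := by
    intro s j
    rw [hVsucc]
    exact le_iSup (fun s => Submodule.map (L s) (V j)) s
  have hanti : ∀ j, V (j + 1) ≤ V j := by
    intro j
    induction j with
    | zero => exact le_top
    | succ j ih =>
      rw [hVsucc (j + 1)]
      exact iSup_le fun s => le_trans (Submodule.map_mono ih) (hmap s j)
  -- nilpotency of the chain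
  have hword : ∀ j : ℕ, V (j + 1) ≤ ⨆ (s : S) (_ : ∃ f : Fin (j + 1) → S,
      (List.ofFn fun i : Fin j => f i.succ).foldl (· * ·) (f 0) = s), LinearMap.range (L s) := by
    intro j
    induction j with
    | zero =>
      rw [hVsucc, hV0]
      refine iSup_le fun s => ?_
      have hs : ∃ f : Fin 1 → S,
          (List.ofFn fun i : Fin 0 => f i.succ).foldl (· * ·) (f 0) = s := ⟨fun _ => s, rfl⟩
      rw [Submodule.map_top]
      exact le_iSup_of_le s (le_iSup_of_le hs le_rfl)
    | succ j ih =>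
      rw [hVsucc (j + 1)]
      refine iSup_le fun s => ?_
      refine le_trans (Submodule.map_mono ih) ?_
      rw [Submodule.map_iSup]
      refine iSup_le fun t => ?_
      rw [Submodule.map_iSup]
      refine iSup_le fun ht => ?_
      obtain ⟨f, hf⟩ := ht
      have hrange : Submodule.map (L s) (LinearMap.range (L t)) = LinearMap.range (L (s * t)) := by
        rw [← LinearMap.range_comp, hL]
        simp only []
        rw [← Matrix.toLin'_mul, ← hhom]
      rw [hrange]
      have hst : ∃ g : Fin (j + 2) → S,
          (List.ofFn fun i : Fin (j + 1) => g i.succ).foldl (· * ·) (g 0) = s * t := by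
        refine ⟨Fin.cons s f, ?_⟩
        have h1 : (fun i : Fin (j + 1) => (Fin.cons s f : Fin (j + 2) → S) i.succ) = f := by
          funext i; exact Fin.cons_succ _ _ _
        rw [Fin.cons_zero, h1, List.ofFn_succ, List.foldl_cons, foldl_mul_assoc', hf]
      exact le_iSup_of_le (s * t) (le_iSup_of_le hst le_rfl)
  have hVbot : V (n + 1) = ⊥ := by
    refine le_antisymm (le_trans (hword n) ?_) bot_le
    refine iSup_le fun s => iSup_le fun hs => ?_
    obtain ⟨f, hf⟩ := hs
    have hsz : s = z := by rw [← hf]; exact hn f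
    rw [hsz, hL]
    simp [hφz]
  -- build an adapted basis by induction
  have claim : ∀ j, j ≤ n + 1 → ∃ (d : ℕ) (v : Fin d → (Fin m → k)),
      LinearIndependent k v ∧ Submodule.span k (Set.range v) = V (n + 1 - j) ∧
      ∀ q : Fin d, ∃ j' ≤ n, v q ∈ V (n - j') ∧
        V (n + 1 - j') ≤ Submodule.span k (v '' {p | p < q}) := by
    intro j
    induction j with
    | zero =>
      intro _
      refine ⟨0, Fin.elim0, linearIndependent_empty_type, ?_, fun q => q.elim0⟩
      rw [Set.range_eq_empty, Submodule.span_empty, Nat.sub_zero, hVbot]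
    | succ j ih =>
      intro hj1
      have hjn : j ≤ n := by omega
      obtain ⟨d, v, hli, hsp, hpr⟩ := ih (by omega)
      obtain ⟨D, hD⟩ := Submodule.exists_isCompl (V (n + 1 - j))
      set C : Submodule k (Fin m → k) := V (n - j) ⊓ D with hC
      have hsub : V (n + 1 - j) ≤ V (n - j) := by
        have h1 : n + 1 - j = (n - j) + 1 := by omega
        rw [h1]; exact hanti _
      have hsupC : V (n + 1 - j) ⊔ C = V (n - j) := by
        rw [sup_comm, hC, inf_sup_assoc_of_le D hsub]
        rw [sup_comm D, hD.sup_eq_top, inf_top_eq]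
      have hdisj : Disjoint (V (n + 1 - j)) C := hD.disjoint.mono_right inf_le_right
      set e : ℕ := Module.finrank k C with he
      let w : Module.Basis (Fin e) k C := Module.finBasis k C
      set w' : Fin e → (Fin m → k) := fun r => (w r : Fin m → k) with hw'
      have hliw : LinearIndependent k w' := by
        have := w.linearIndependent.map' C.subtype C.ker_subtype
        exact this
      have hspw : Submodule.span k (Set.range w') = C := by
        have h1 : Set.range w' = C.subtype '' Set.range w := by
          rw [← Set.range_comp]; rfl
        rw [h1, ← Submodule.map_span, w.span_eq, Submodule.map_top, Submodule.range_subtype]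
      have happ : Fin.append v w' = Sum.elim v w' ∘ finSumFinEquiv.symm := by
        funext q
        refine Fin.addCases (fun p => ?_) (fun r => ?_) q
        · rw [Fin.append_left, Function.comp_apply, finSumFinEquiv_symm_apply_castAdd,
            Sum.elim_inl]
        · rw [Fin.append_right, Function.comp_apply, finSumFinEquiv_symm_apply_natAdd,
            Sum.elim_inr]
      have hdisj2 : Disjoint (Submodule.span k (Set.range v))
          (Submodule.span k (Set.range w')) := by
        rw [hsp, hspw]; exact hdisj
      have hli2 : LinearIndependent k (Fin.append v w') := by
        rw [happ]
        exact (hli.sum_type hliw hdisj2).comp _ finSumFinEquiv.symm.injective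
      refine ⟨d + e, Fin.append v w', hli2, ?_, ?_⟩
      · have hrange : Set.range (Fin.append v w') = Set.range v ∪ Set.range w' := by
          rw [happ, Set.range_comp, Equiv.range_eq_univ, Set.image_univ, Set.Sum.elim_range]
        have h1 : n + 1 - (j + 1) = n - j := by omega
        rw [hrange, Submodule.span_union, hsp, hspw, hsupC, h1]
      · intro q
        refine Fin.addCases (motive := fun q => ∃ j' ≤ n, Fin.append v w' q ∈ V (n - j') ∧
          V (n + 1 - j') ≤ Submodule.span k (Fin.append v w' '' {p | p < q}))
          (fun p => ?_) (fun r => ?_) q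
        · obtain ⟨j', hj', hmem, hle⟩ := hpr p
          refine ⟨j', hj', ?_, ?_⟩
          · rw [Fin.append_left]; exact hmem
          · refine le_trans hle (Submodule.span_mono ?_)
            rintro x ⟨p', hp', rfl⟩
            refine ⟨Fin.castAdd e p', ?_, Fin.append_left v w' p'⟩
            simp only [Set.mem_setOf_eq, Fin.lt_def, Fin.coe_castAdd]
            exact hp'
        · refine ⟨j, hjn, ?_, ?_⟩
          · rw [Fin.append_right]
            exact inf_le_left (b := D) (SetLike.coe_mem (w r))
          · rw [← hsp]
            refine Submodule.span_mono ?_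
            rintro x ⟨p, rfl⟩
            refine ⟨Fin.castAdd e p, ?_, Fin.append_left v w' p⟩
            simp only [Set.mem_setOf_eq, Fin.lt_def, Fin.coe_castAdd, Fin.coe_natAdd]
            omega
  -- extract the basis
  obtain ⟨d, v, hli, hsp, hpr⟩ := claim (n + 1) le_rfl
  have h0 : n + 1 - (n + 1) = 0 := by omega
  rw [h0, hV0] at hsp
  have hd : d = m := by
    have h1 := finrank_span_eq_card hli
    rw [hsp, finrank_top, Module.finrank_fin_fun, Fintype.card_fin] at h1
    omega
  subst hd
  let b : Module.Basis (Fin d) k (Fin d → k) := Module.Basis.mk hli (le_of_eq hsp.symm)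
  have hb : ⇑b = v := Module.Basis.coe_mk hli _
  clear_value b
  have key : ∀ (s : S) (q : Fin d),
      Matrix.toLin' (φ s) (b q) ∈ Submodule.span k (⇑b '' {p | p < q}) := by
    intro s q
    rw [hb]
    obtain ⟨j', hj', hmem, hle⟩ := hpr q
    have h1 : Matrix.toLin' (φ s) (v q) ∈ Submodule.map (L s) (V (n - j')) :=
      Submodule.mem_map_of_mem hmem
    have h2 : n - j' + 1 = n + 1 - j' := by omega
    have h3 := hmap s (n - j')
    rw [h2] at h3
    exact hle (h3 h1)
  set E : Module.Basis (Fin d) k (Fin d → k) := Pi.basisFun k (Fin d) with hE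
  set P : Matrix (Fin d) (Fin d) k := E.toMatrix ⇑b with hP
  have hPinv : P⁻¹ = b.toMatrix ⇑E :=
    Matrix.inv_eq_right_inv (Module.Basis.toMatrix_mul_toMatrix_flip E b)
  refine ⟨P, ?_, ?_⟩
  · haveI := E.invertibleToMatrix b
    exact isUnit_of_invertible P
  · intro s i j hij
    have hconj : P⁻¹ * φ s * P = LinearMap.toMatrix b b (Matrix.toLin' (φ s)) := by
      have h1 : E.toMatrix ⇑b * LinearMap.toMatrix b b (Matrix.toLin' (φ s)) * b.toMatrix ⇑E
          = LinearMap.toMatrix E E (Matrix.toLin' (φ s)) :=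
        basis_toMatrix_mul_linearMap_toMatrix_mul_basis_toMatrix E b E b _
      have h2 : LinearMap.toMatrix E E (Matrix.toLin' (φ s)) = φ s := by
        rw [hE, LinearMap.toMatrix_eq_toMatrix', LinearMap.toMatrix'_toLin']
      have h3 : b.toMatrix ⇑E * E.toMatrix ⇑b = 1 := Module.Basis.toMatrix_mul_toMatrix_flip b E
      calc P⁻¹ * φ s * P
          = b.toMatrix ⇑E * LinearMap.toMatrix E E (Matrix.toLin' (φ s)) * E.toMatrix ⇑b := by
            rw [hPinv, h2]
        _ = b.toMatrix ⇑E * (E.toMatrix ⇑b * LinearMap.toMatrix b b (Matrix.toLin' (φ s)) *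
              b.toMatrix ⇑E) * E.toMatrix ⇑b := by rw [h1]
        _ = (b.toMatrix ⇑E * E.toMatrix ⇑b) * LinearMap.toMatrix b b (Matrix.toLin' (φ s)) *
              (b.toMatrix ⇑E * E.toMatrix ⇑b) := by simp only [Matrix.mul_assoc]
        _ = LinearMap.toMatrix b b (Matrix.toLin' (φ s)) := by rw [h3, one_mul, mul_one]
    rw [hconj, LinearMap.toMatrix_apply]
    have hmem := key s j
    rw [Module.Basis.mem_span_image] at hmem
    by_contra hne
    have hi : i ∈ (b.repr (Matrix.toLin' (φ s) (b j))).support := Finsupp.mem_support_iff.2 hne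
    have := hmem hi
    simp only [Finset.coe_sort_coe, Set.mem_setOf_eq] at this
    exact absurd this (not_lt.2 hij)
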